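/- Let $C \subseteq \mathbb{R}^n$ be a nonempty closed convex set, let $a > 0$ and $v \in \mathbb{R}^n$ be fixed. Then the equation $-a(\xi + v) = \mathrm{proj}_{C+\xi}(0)$ has the unique solution $\xi = -\left(\frac{1}{1+a}\mathrm{proj}_C(v) + \frac{a}{1+a} v\right)$, where $\mathrm{proj}_C(x)$ denotes the metric projection of $x$ onto $C$ and $C + \xi = \{c + \xi : c \in C\}$. -/

import Mathlib

open RealInnerProductSpace

/-- `p` is the metric projection of `x` onto `C`. -/
def IsProjOn {n : ℕ} (C : Set (EuclideanSpace ℝ (Fin n)))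
    (x p : EuclideanSpace ℝ (Fin n)) : Prop :=
  p ∈ C ∧ ∀ y ∈ C, dist x p ≤ dist x y

/-- Variational characterization of the metric projection onto a convex set. -/
lemma isProjOn_iff {n : ℕ} {C : Set (EuclideanSpace ℝ (Fin n))}
    (hconv : Convex ℝ C) {x p : EuclideanSpace ℝ (Fin n)} :
    IsProjOn C x p ↔ p ∈ C ∧ ∀ y ∈ C, ⟪x - p, y - p⟫ ≤ 0 := by
  constructor
  · rintro ⟨hp, hmin⟩
    refine ⟨hp, fun y hy => ?_⟩
    by_contra hlt
    push_neg at hlt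
    have hyp : y - p ≠ 0 := by
      intro h0
      rw [h0, inner_zero_right] at hlt
      exact lt_irrefl 0 hlt
    have hnorm : 0 < ‖y - p‖ ^ 2 := by
      have := norm_pos_iff.mpr hyp
      positivity
    set ε : ℝ := ⟪x - p, y - p⟫ with hε
    set t : ℝ := min 1 (ε / ‖y - p‖ ^ 2) with ht
    have ht0 : 0 < t := lt_min one_pos (div_pos hlt hnorm)
    have ht1 : t ≤ 1 := min_le_left _ _
    have htle : t * ‖y - p‖ ^ 2 ≤ ε := by
      have h := min_le_right 1 (ε / ‖y - p‖ ^ 2)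
      calc t * ‖y - p‖ ^ 2 ≤ (ε / ‖y - p‖ ^ 2) * ‖y - p‖ ^ 2 := by
            exact mul_le_mul_of_nonneg_right h (le_of_lt hnorm)
        _ = ε := by field_simp
    have hz : p + t • (y - p) ∈ C := by
      have h := hconv hp hy (by linarith : (0:ℝ) ≤ 1 - t) (le_of_lt ht0) (by ring)
      have : (1 - t) • p + t • y = p + t • (y - p) := by module
      rwa [this] at h
    have h := hmin _ hz
    rw [dist_eq_norm, dist_eq_norm] at h
    have hsq : ‖x - p‖ ^ 2 ≤ ‖x - (p + t • (y - p))‖ ^ 2 :=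
      pow_le_pow_left₀ (norm_nonneg _) h 2
    have hexp : ‖x - (p + t • (y - p))‖ ^ 2
        = ‖x - p‖ ^ 2 - 2 * t * ε + t ^ 2 * ‖y - p‖ ^ 2 := by
      have e1 : x - (p + t • (y - p)) = (x - p) - t • (y - p) := by abel
      rw [e1, norm_sub_sq_real, real_inner_smul_right, norm_smul, mul_pow]
      simp [abs_of_pos ht0, hε]
      ring
    nlinarith [hlt, ht0, htle, hsq, hexp]
  · rintro ⟨hp, hinner⟩
    refine ⟨hp, fun y hy => ?_⟩
    have h := hinner y hy
    rw [dist_eq_norm, dist_eq_norm]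
    have key : ‖x - p‖ ^ 2 ≤ ‖x - y‖ ^ 2 := by
      have e1 : x - y = (x - p) - (y - p) := by abel
      rw [e1]
      nth_rewrite 2 [norm_sub_sq_real]
      nlinarith [sq_nonneg ‖y - p‖]
    nlinarith [key, norm_nonneg (x - p), norm_nonneg (x - y)]

/-- Projections are unique. -/
lemma isProjOn_unique {n : ℕ} {C : Set (EuclideanSpace ℝ (Fin n))}
    (hconv : Convex ℝ C) {x p q : EuclideanSpace ℝ (Fin n)}
    (hp : IsProjOn C x p) (hq : IsProjOn C x q) : p = q := by
  obtain ⟨hpm, hpi⟩ := (isProjOn_iff hconv).mp hp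
  obtain ⟨hqm, hqi⟩ := (isProjOn_iff hconv).mp hq
  have h1 := hpi q hqm
  have h2 := hqi p hpm
  have key : ⟪p - q, p - q⟫ ≤ 0 := by
    have e1 : p - q = (x - q) - (x - p) := by abel
    nth_rewrite 1 [e1]
    rw [inner_sub_left]
    have e2 : q - p = -(p - q) := by abel
    rw [e2, inner_neg_right] at h1
    linarith
  have := (@real_inner_self_nonpos (EuclideanSpace ℝ (Fin n)) _ _ (p - q)).mp key
  have : p - q = 0 := this
  have := sub_eq_zero.mp this
  exact this

/-- Translation of projections. -/
lemma isProjOn_translate {n : ℕ} {C : Set (EuclideanSpace ℝ (Fin n))}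
    {x p ξ : EuclideanSpace ℝ (Fin n)} :
    IsProjOn ((· + ξ) '' C) (x + ξ) (p + ξ) ↔ IsProjOn C x p := by
  unfold IsProjOn
  constructor
  · rintro ⟨⟨c, hc, hcp⟩, hmin⟩
    have hcpe : c = p := by
      have := hcp
      simpa using add_right_cancel this
    subst hcpe
    refine ⟨hc, fun y hy => ?_⟩
    have h := hmin (y + ξ) ⟨y, hy, rfl⟩
    rwa [dist_add_right, dist_add_right] at h
  · rintro ⟨hp, hmin⟩
    refine ⟨⟨p, hp, rfl⟩, ?_⟩
    rintro z ⟨y, hy, rfl⟩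
    rw [dist_add_right, dist_add_right]
    exact hmin y hy

theorem stmt_1 {n : ℕ} (C : Set (EuclideanSpace ℝ (Fin n)))
    (hne : C.Nonempty) (hcl : IsClosed C) (hconv : Convex ℝ C)
    (a : ℝ) (ha : 0 < a) (v pC : EuclideanSpace ℝ (Fin n))
    (hpC : IsProjOn C v pC) :
    ∀ ξ : EuclideanSpace ℝ (Fin n),
      (∃ q, IsProjOn ((· + ξ) '' C) 0 q ∧ (-a) • (ξ + v) = q) ↔
        ξ = -((1 / (1 + a)) • pC + (a / (1 + a)) • v) := by
  intro ξ
  have h1a : (0:ℝ) < 1 + a := by linarith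
  have h1a' : (1 + a : ℝ) ≠ 0 := ne_of_gt h1a
  have ha' : (a : ℝ) ≠ 0 := ne_of_gt ha
  obtain ⟨hpCm, hpCi⟩ := (isProjOn_iff hconv).mp hpC
  constructor
  · rintro ⟨q, hq, hq'⟩
    obtain ⟨c, hc, hcq⟩ := hq.1
    have hcq' : c + ξ = q := hcq
    -- c is the projection of -ξ onto C
    have hzero : (0 : EuclideanSpace ℝ (Fin n)) = -ξ + ξ := by simp
    have hq2 : IsProjOn ((· + ξ) '' C) (-ξ + ξ) (c + ξ) := by
      rw [← hzero, hcq']; exact hq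
    have hproj : IsProjOn C (-ξ) c := isProjOn_translate.mp hq2
    have hinner := ((isProjOn_iff hconv).mp hproj).2
    have hc_eq : c = (-a) • (ξ + v) - ξ := by
      rw [hq', ← hcq']; module
    -- c is also the projection of v onto C
    have hprojv : IsProjOn C v c := by
      rw [isProjOn_iff hconv]
      refine ⟨hc, fun y hy => ?_⟩
      have h := hinner y hy
      have e1 : -ξ - c = a • (ξ + v) := by rw [hc_eq]; module
      have e2 : v - c = (1 + a) • (ξ + v) := by rw [hc_eq]; module
      rw [e1, real_inner_smul_left] at h
      rw [e2, real_inner_smul_left]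
      have hle : ⟪ξ + v, y - c⟫ ≤ 0 := by nlinarith
      exact mul_nonpos_of_nonneg_of_nonpos (le_of_lt h1a) hle
    have hcpc : c = pC := isProjOn_unique hconv hprojv hpC
    -- solve for ξ
    have : pC = (-a) • (ξ + v) - ξ := by rw [← hcpc, hc_eq]
    rw [this]
    match_scalars <;> field_simp <;> ring
  · rintro rfl
    set ξ := -((1 / (1 + a)) • pC + (a / (1 + a)) • v) with hξ
    refine ⟨pC + ξ, ?_, ?_⟩
    · have hproj : IsProjOn C (-ξ) pC := by
        rw [isProjOn_iff hconv]
        refine ⟨hpCm, fun y hy => ?_⟩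
        have e1 : -ξ - pC = (a / (1 + a)) • (v - pC) := by
          rw [hξ]; match_scalars <;> field_simp <;> ring
        rw [e1, real_inner_smul_left]
        exact mul_nonpos_of_nonneg_of_nonpos (by positivity) (hpCi y hy)
      have := (isProjOn_translate (ξ := ξ)).mpr hproj
      have hzero : -ξ + ξ = (0 : EuclideanSpace ℝ (Fin n)) := by simp
      rwa [hzero] at this
    · rw [hξ]; match_scalars <;> field_simp <;> ring
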